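/- Let $S_1,\ldots,S_K$ be mutually independent random symmetric $p\times p$ real matrices with finite second moments and $E[S_k]=M_k$, and set $\delta_k=p^{-1}E[\|S_k-M_k\|_F^2]>0$, $c_{ij}=p^{-1}\operatorname{tr}(M_iM_j)$, $D=\operatorname{diag}(\delta_1,\ldots,\delta_K)$, $C=(c_{ij})$, $c_k$ the $k$-th column of $C$. Then the function $a\mapsto E[\|\sum_{i=1}^K a_iS_i - M_k\|_F^2]$ over $a\in\mathbb{R}^K$ attains its unique global minimum at $a_k^\star = (D+C)^{-1}c_k$. -/

import Mathlib

open MeasureTheory Matrix ProbabilityTheory Filter Asymptotics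

noncomputable section

/-- Borel/pi measurable structure on matrices (a matrix is a function of its entries). -/
instance matrixMeasurableSpace {p : ℕ} : MeasurableSpace (Matrix (Fin p) (Fin p) ℝ) :=
  inferInstanceAs (MeasurableSpace (Fin p → Fin p → ℝ))

/-- Squared Frobenius norm `‖A‖_F² = tr(Aᵀ A)`. -/
def frobSq {p : ℕ} (A : Matrix (Fin p) (Fin p) ℝ) : ℝ := (Aᵀ * A).trace

/-- Entrywise expectation of a random matrix. -/
def matExp {Ω : Type*} [MeasurableSpace Ω] (μ : Measure Ω) {p : ℕ}
    (S : Ω → Matrix (Fin p) (Fin p) ℝ) : Matrix (Fin p) (Fin p) ℝ :=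
  Matrix.of fun i j => ∫ ω, S ω i j ∂μ

lemma frobSq_eq' {p : ℕ} (A : Matrix (Fin p) (Fin p) ℝ) :
    (Aᵀ * A).trace = ∑ r, ∑ c, (A r c)^2 := by
  simp only [Matrix.trace, Matrix.diag, Matrix.mul_apply, Matrix.transpose_apply, sq]
  rw [Finset.sum_comm]

lemma sum_swap3 {α β γ : Type*} [Fintype α] [Fintype β] [Fintype γ] (f : α → β → γ → ℝ) :
    ∑ r, ∑ c, ∑ i, f r c i = ∑ i, ∑ r, ∑ c, f r c i := by
  have h1 : ∀ r, ∑ c, ∑ i, f r c i = ∑ i, ∑ c, f r c i := fun r => by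
    rw [Finset.sum_comm]
  simp only [h1]
  rw [Finset.sum_comm]

lemma integral_sq_sum_indep {Ω : Type*} [MeasurableSpace Ω] (μ : Measure Ω)
    [IsProbabilityMeasure μ] {K : ℕ} (Y : Fin K → Ω → ℝ)
    (hL2 : ∀ i, MemLp (Y i) 2 μ)
    (hind : ∀ i j, i ≠ j → IndepFun (Y i) (Y j) μ)
    (hmean : ∀ i, ∫ ω, Y i ω ∂μ = 0)
    (a : Fin K → ℝ) (c : ℝ) :
    ∫ ω, (∑ i, a i * Y i ω + c)^2 ∂μ
      = c^2 + ∑ i, (a i)^2 * ∫ ω, (Y i ω)^2 ∂μ := by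
  have hint : ∀ i, Integrable (Y i) μ := fun i => (hL2 i).integrable one_le_two
  have hprod : ∀ i j, Integrable (fun ω => Y i ω * Y j ω) μ := by
    intro i j
    rcases eq_or_ne i j with rfl | hij
    · simpa [sq] using (hL2 i).integrable_sq
    · exact (hind i j hij).integrable_mul (hint i) (hint j)
  have hIprod : ∀ i j, i ≠ j → ∫ ω, Y i ω * Y j ω ∂μ = 0 := by
    intro i j hij
    have h := (hind i j hij).integral_fun_mul_eq_mul_integral (hL2 i).aestronglyMeasurable (hL2 j).aestronglyMeasurable
    have h2 : ∫ ω, Y i ω * Y j ω ∂μ = (∫ ω, Y i ω ∂μ) * ∫ ω, Y j ω ∂μ := h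
    rw [h2, hmean i, hmean j, mul_zero]
  have hpt : ∀ ω, (∑ i, a i * Y i ω + c)^2
      = (∑ i, ∑ j, (a i * a j) * (Y i ω * Y j ω)) + ((2*c) * (∑ i, a i * Y i ω) + c^2) := by
    intro ω
    have h1 : (∑ i, a i * Y i ω)^2 = ∑ i, ∑ j, (a i * a j) * (Y i ω * Y j ω) := by
      rw [sq, Finset.sum_mul_sum]
      exact Finset.sum_congr rfl fun i _ => Finset.sum_congr rfl fun j _ => by ring
    rw [add_sq, h1]; ring
  simp only [hpt]
  have hIin : ∀ i, Integrable (fun ω => ∑ j, (a i * a j) * (Y i ω * Y j ω)) μ :=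
    fun i => integrable_finset_sum _ fun j _ => (hprod i j).const_mul _
  have hIbig : Integrable (fun ω => ∑ i, ∑ j, (a i * a j) * (Y i ω * Y j ω)) μ :=
    integrable_finset_sum _ fun i _ => hIin i
  have hIl : Integrable (fun ω => (2*c) * (∑ i, a i * Y i ω)) μ :=
    (integrable_finset_sum _ fun i _ => (hint i).const_mul (a i)).const_mul _
  have hIl2 : Integrable (fun ω => (2*c) * (∑ i, a i * Y i ω) + c^2) μ :=
    hIl.add (integrable_const _)
  rw [integral_add hIbig hIl2, integral_add hIl (integrable_const (c^2)),
    integral_finset_sum _ fun i _ => hIin i]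
  have hbig : ∀ i, ∫ ω, ∑ j, (a i * a j) * (Y i ω * Y j ω) ∂μ = (a i)^2 * ∫ ω, (Y i ω)^2 ∂μ := by
    intro i
    rw [integral_finset_sum _ fun j _ => (hprod i j).const_mul _]
    rw [Finset.sum_eq_single i]
    · rw [integral_const_mul]; simp only [pow_two]
    · intro j _ hji
      rw [integral_const_mul, hIprod i j (Ne.symm hji), mul_zero]
    · intro h; exact absurd (Finset.mem_univ i) h
  simp only [hbig]
  rw [integral_const_mul, integral_finset_sum _ fun i _ => (hint i).const_mul (a i)]
  simp only [integral_const_mul, hmean, mul_zero, Finset.sum_const_zero]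
  simp [add_comm]

/-- Proposition 2 of the paper: the unconstrained MSE
`a ↦ E‖∑ᵢ aᵢSᵢ − M_k‖_F²` attains its unique global minimum at
`a⋆ₖ = (D+C)⁻¹ cₖ`. -/
theorem unconstrained_optimal_coefficients
    {Ω : Type*} [MeasurableSpace Ω] (μ : Measure Ω) [IsProbabilityMeasure μ]
    (p K : ℕ) (hp : 0 < p)
    (S : Fin K → Ω → Matrix (Fin p) (Fin p) ℝ)
    (hmeas : ∀ k, Measurable (S k))
    (hsymm : ∀ k ω, (S k ω)ᵀ = S k ω)
    (hL2 : ∀ k i j, MemLp (fun ω => S k ω i j) 2 μ)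
    (hindep : iIndepFun S μ)
    (M : Fin K → Matrix (Fin p) (Fin p) ℝ)
    (hM : ∀ k, matExp μ (S k) = M k)
    (δ : Fin K → ℝ)
    (hδ : ∀ k, δ k = (p : ℝ)⁻¹ * ∫ ω, frobSq (S k ω - M k) ∂μ)
    (hδpos : ∀ k, 0 < δ k)
    (C : Matrix (Fin K) (Fin K) ℝ)
    (hC : ∀ i j, C i j = (p : ℝ)⁻¹ * (M i * M j).trace)
    (D : Matrix (Fin K) (Fin K) ℝ) (hD : D = Matrix.diagonal δ)
    (astar : Fin K → Fin K → ℝ)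
    (hastar : ∀ k, astar k = (D + C)⁻¹ *ᵥ (fun i => C i k)) :
    ∀ (k : Fin K) (a : Fin K → ℝ), a ≠ astar k →
      ∫ ω, frobSq (∑ i, astar k i • S i ω - M k) ∂μ
        < ∫ ω, frobSq (∑ i, a i • S i ω - M k) ∂μ := by
  have hp0 : (p : ℝ) ≠ 0 := Nat.cast_ne_zero.mpr hp.ne'
  have hppos : (0:ℝ) < p := Nat.cast_pos.mpr hp
  have hMval : ∀ i r c, ∫ ω, S i ω r c ∂μ = M i r c := by
    intro i r c; conv_rhs => rw [← hM i]
    rfl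
  have hMsymm : ∀ i r c, M i c r = M i r c := by
    intro i r c
    conv_lhs => rw [← hM i]
    conv_rhs => rw [← hM i]
    show ∫ ω, S i ω c r ∂μ = ∫ ω, S i ω r c ∂μ
    exact integral_congr_ae (Eventually.of_forall fun ω =>
      congrFun (congrFun (hsymm i ω) r) c)
  have hentL2 : ∀ (i : Fin K) (r c : Fin p), MemLp (fun ω => S i ω r c - M i r c) 2 μ :=
    fun i r c => (hL2 i r c).sub (memLp_const _)
  have hentInt : ∀ (i : Fin K) (r c : Fin p), Integrable (fun ω => S i ω r c) μ :=
    fun i r c => (hL2 i r c).integrable one_le_two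
  have hmean0 : ∀ (i : Fin K) (r c : Fin p), ∫ ω, (S i ω r c - M i r c) ∂μ = 0 := by
    intro i r c
    rw [integral_sub (hentInt i r c) (integrable_const _), hMval]
    simp
  have hindE : ∀ (r c : Fin p) (i j : Fin K), i ≠ j →
      IndepFun (fun ω => S i ω r c - M i r c) (fun ω => S j ω r c - M j r c) μ := by
    intro r c i j hij
    have h0 : IndepFun (S i) (S j) μ := hindep.indepFun hij
    have hm : ∀ l : Fin K, Measurable (fun A : Matrix (Fin p) (Fin p) ℝ => A r c - M l r c) :=
      fun l => Measurable.sub (f := fun A : Matrix (Fin p) (Fin p) ℝ => A r c) ((measurable_pi_apply c).comp (measurable_pi_apply r)) measurable_const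
    exact h0.comp (hm i) (hm j)
  have hGC : ∀ i j, ∑ r, ∑ c, M i r c * M j r c = (p:ℝ) * C i j := by
    intro i j
    have ht : (M i * M j).trace = ∑ r, ∑ c, M i r c * M j r c := by
      rw [Matrix.trace]
      simp only [Matrix.diag, Matrix.mul_apply]
      exact Finset.sum_congr rfl fun r _ => Finset.sum_congr rfl fun c _ => by
        rw [hMsymm j r c]
    rw [hC i j, ht, ← mul_assoc, mul_inv_cancel₀ hp0, one_mul]
  have hvar : ∀ i, ∑ r, ∑ c, ∫ ω, (S i ω r c - M i r c)^2 ∂μ = (p:ℝ) * δ i := by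
    intro i
    have hpt : ∀ ω, frobSq (S i ω - M i) = ∑ r, ∑ c, (S i ω r c - M i r c)^2 := by
      intro ω
      show ((S i ω - M i)ᵀ * (S i ω - M i)).trace = _
      rw [frobSq_eq']
      rfl
    have h1 : ∫ ω, frobSq (S i ω - M i) ∂μ = ∑ r, ∑ c, ∫ ω, (S i ω r c - M i r c)^2 ∂μ := by
      simp only [hpt]
      rw [integral_finset_sum _ fun r _ => integrable_finset_sum _ fun c _ =>
        (hentL2 i r c).integrable_sq]
      exact Finset.sum_congr rfl fun r _ =>
        integral_finset_sum _ fun c _ => (hentL2 i r c).integrable_sq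
    rw [← h1, hδ i, ← mul_assoc, mul_inv_cancel₀ hp0, one_mul]
  -- quadratic forms associated to M
  have hT1 : ∀ u : Fin K → ℝ, ∀ l : Fin K,
      ∑ r, ∑ c, (∑ i, u i * M i r c) * M l r c = ∑ i, u i * ((p:ℝ) * C i l) := by
    intro u l
    have hpt : ∀ (r c : Fin p), (∑ i, u i * M i r c) * M l r c
        = ∑ i, u i * (M i r c * M l r c) := by
      intro r c
      rw [Finset.sum_mul]
      exact Finset.sum_congr rfl fun i _ => by ring
    simp only [hpt]
    rw [sum_swap3 (fun r c i => u i * (M i r c * M l r c))]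
    refine Finset.sum_congr rfl fun i _ => ?_
    rw [← hGC i l, Finset.mul_sum]
    exact Finset.sum_congr rfl fun r _ => by rw [Finset.mul_sum]
  have hCsymm : ∀ i j, C i j = C j i := by
    intro i j; rw [hC, hC, Matrix.trace_mul_comm]
  have hT2 : ∀ u : Fin K → ℝ,
      ∑ r, ∑ c, (∑ i, u i * M i r c)^2 = ∑ i, ∑ j, u i * u j * ((p:ℝ) * C i j) := by
    intro u
    have hpt : ∀ (r c : Fin p), (∑ i, u i * M i r c)^2
        = ∑ l, u l * ((∑ i, u i * M i r c) * M l r c) := by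
      intro r c
      rw [sq, Finset.mul_sum]
      exact Finset.sum_congr rfl fun l _ => by ring
    simp only [hpt]
    rw [sum_swap3 (fun r c l => u l * ((∑ i, u i * M i r c) * M l r c))]
    refine Finset.sum_congr rfl fun l _ => ?_
    simp only [← Finset.mul_sum]
    rw [hT1 u l, Finset.mul_sum]
    refine Finset.sum_congr rfl fun j _ => ?_
    rw [hCsymm j l]; ring
  have hdiag : ∀ u : Fin K → ℝ, ∑ i, ∑ j, u i * u j * D i j = ∑ i, (u i)^2 * δ i := by
    intro u
    refine Finset.sum_congr rfl fun i _ => ?_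
    rw [Finset.sum_eq_single i]
    · rw [hD, Matrix.diagonal_apply_eq]; ring
    · intro j _ hji
      rw [hD, Matrix.diagonal_apply_ne _ (Ne.symm hji), mul_zero]
    · intro h; exact absurd (Finset.mem_univ i) h
  intro k a hne
  have key : ∀ b : Fin K → ℝ, ∫ ω, frobSq (∑ i, b i • S i ω - M k) ∂μ
      = (p:ℝ) * ((∑ i, ∑ j, b i * b j * (D + C) i j)
          - 2 * (∑ i, b i * C i k) + C k k) := by
    intro b
    have hptA : ∀ ω, frobSq (∑ i, b i • S i ω - M k)
        = ∑ r, ∑ c, (∑ i, b i * S i ω r c - M k r c)^2 := by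
      intro ω
      show ((∑ i, b i • S i ω - M k)ᵀ * _).trace = _
      rw [frobSq_eq']
      refine Finset.sum_congr rfl fun r _ => Finset.sum_congr rfl fun c _ => ?_
      congr 1
      simp [Matrix.sub_apply, Matrix.sum_apply, Matrix.smul_apply, smul_eq_mul]
    have hL2sum : ∀ (r c : Fin p), MemLp (fun ω => ∑ i, b i * S i ω r c - M k r c) 2 μ := by
      intro r c
      have h := (memLp_finset_sum' Finset.univ fun i _ =>
        (hL2 i r c).const_mul (b i)).sub (memLp_const (M k r c))
      have heq : ((∑ i, fun ω => b i * S i ω r c) - fun _ => M k r c)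
          = fun ω => ∑ i, b i * S i ω r c - M k r c := by
        funext ω; simp [Finset.sum_apply]
      rwa [heq] at h
    have hrc : ∀ (r c : Fin p), ∫ ω, (∑ i, b i * S i ω r c - M k r c)^2 ∂μ
        = (∑ i, b i * M i r c - M k r c)^2
          + ∑ i, (b i)^2 * ∫ ω, (S i ω r c - M i r c)^2 ∂μ := by
      intro r c
      have hsplit : ∀ ω, (∑ i, b i * S i ω r c - M k r c)
          = ∑ i, b i * (S i ω r c - M i r c) + (∑ i, b i * M i r c - M k r c) := by
        intro ω
        have h2 : ∑ i, b i * (S i ω r c - M i r c) + ∑ i, b i * M i r c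
            = ∑ i, b i * S i ω r c := by
          rw [← Finset.sum_add_distrib]
          exact Finset.sum_congr rfl fun i _ => by ring
        linarith [h2]
      calc ∫ ω, (∑ i, b i * S i ω r c - M k r c)^2 ∂μ
          = ∫ ω, (∑ i, b i * (S i ω r c - M i r c)
              + (∑ i, b i * M i r c - M k r c))^2 ∂μ :=
            integral_congr_ae (Eventually.of_forall fun ω => congrArg (· ^ 2) (hsplit ω))
        _ = _ := by
            rw [integral_sq_sum_indep μ _ (fun i => hentL2 i r c) (hindE r c)
              (fun i => hmean0 i r c)]
    have step1 : ∫ ω, frobSq (∑ i, b i • S i ω - M k) ∂μ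
        = ∑ r, ∑ c, ∫ ω, (∑ i, b i * S i ω r c - M k r c)^2 ∂μ := by
      simp only [hptA]
      rw [integral_finset_sum _ fun r _ => integrable_finset_sum _ fun c _ =>
        (hL2sum r c).integrable_sq]
      exact Finset.sum_congr rfl fun r _ =>
        integral_finset_sum _ fun c _ => (hL2sum r c).integrable_sq
    have step2 : ∑ r, ∑ c, ∑ i, (b i)^2 * ∫ ω, (S i ω r c - M i r c)^2 ∂μ
        = ∑ i, (b i)^2 * ((p:ℝ) * δ i) := by
      rw [sum_swap3 (fun r c i => (b i)^2 * ∫ ω, (S i ω r c - M i r c)^2 ∂μ)]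
      refine Finset.sum_congr rfl fun i _ => ?_
      simp only [← Finset.mul_sum]
      rw [hvar i]
    have step3 : ∑ r, ∑ c, (∑ i, b i * M i r c - M k r c)^2
        = (∑ i, ∑ j, b i * b j * ((p:ℝ) * C i j))
          - 2 * (∑ i, b i * ((p:ℝ) * C i k)) + (p:ℝ) * C k k := by
      have hpt : ∀ (r c : Fin p), (∑ i, b i * M i r c - M k r c)^2
          = (∑ i, b i * M i r c)^2 - 2 * ((∑ i, b i * M i r c) * M k r c)
            + M k r c * M k r c := by
        intro r c; ring
      simp only [hpt]
      simp only [Finset.sum_add_distrib, Finset.sum_sub_distrib]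
      rw [hT2 b]
      rw [show ∑ r, ∑ c, 2 * ((∑ i, b i * M i r c) * M k r c)
          = 2 * ∑ r, ∑ c, (∑ i, b i * M i r c) * M k r c by
        simp only [Finset.mul_sum]]
      rw [hT1 b k, hGC k k]
    have e1 : ∑ i, ∑ j, b i * b j * ((p:ℝ) * C i j)
        = (p:ℝ) * ∑ i, ∑ j, b i * b j * C i j := by
      rw [Finset.mul_sum]
      refine Finset.sum_congr rfl fun i _ => ?_
      rw [Finset.mul_sum]
      exact Finset.sum_congr rfl fun j _ => by ring
    have e2 : ∑ i, b i * ((p:ℝ) * C i k) = (p:ℝ) * ∑ i, b i * C i k := by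
      rw [Finset.mul_sum]
      exact Finset.sum_congr rfl fun i _ => by ring
    have e3 : ∑ i, (b i)^2 * ((p:ℝ) * δ i) = (p:ℝ) * ∑ i, (b i)^2 * δ i := by
      rw [Finset.mul_sum]
      exact Finset.sum_congr rfl fun i _ => by ring
    have e4 : ∑ i, ∑ j, b i * b j * (D + C) i j
        = ∑ i, (b i)^2 * δ i + ∑ i, ∑ j, b i * b j * C i j := by
      rw [← hdiag b, ← Finset.sum_add_distrib]
      refine Finset.sum_congr rfl fun i _ => ?_
      rw [← Finset.sum_add_distrib]
      refine Finset.sum_congr rfl fun j _ => ?_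
      rw [Matrix.add_apply]; ring
    rw [step1]
    simp only [hrc]
    simp only [Finset.sum_add_distrib]
    rw [step3, step2, e1, e2, e3, e4]
    ring
  -- positivity of the quadratic form
  have hquadpos : ∀ u : Fin K → ℝ, u ≠ 0 → 0 < ∑ i, ∑ j, u i * u j * (D + C) i j := by
    intro u hu
    have e4 : ∑ i, ∑ j, u i * u j * (D + C) i j
        = ∑ i, (u i)^2 * δ i + ∑ i, ∑ j, u i * u j * C i j := by
      rw [← hdiag u, ← Finset.sum_add_distrib]
      refine Finset.sum_congr rfl fun i _ => ?_
      rw [← Finset.sum_add_distrib]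
      refine Finset.sum_congr rfl fun j _ => ?_
      rw [Matrix.add_apply]; ring
    have hCpart : 0 ≤ ∑ i, ∑ j, u i * u j * C i j := by
      have h5 : (p:ℝ) * ∑ i, ∑ j, u i * u j * C i j = ∑ r, ∑ c, (∑ i, u i * M i r c)^2 := by
        rw [hT2 u, Finset.mul_sum]
        refine Finset.sum_congr rfl fun i _ => ?_
        rw [Finset.mul_sum]
        exact Finset.sum_congr rfl fun j _ => by ring
      have h6 : 0 ≤ (p:ℝ) * ∑ i, ∑ j, u i * u j * C i j := by
        rw [h5]
        exact Finset.sum_nonneg fun r _ => Finset.sum_nonneg fun c _ => sq_nonneg _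
      nlinarith [h6, hppos]
    have hDpart : 0 < ∑ i, (u i)^2 * δ i := by
      obtain ⟨i0, hi0⟩ : ∃ i, u i ≠ 0 := by
        by_contra h
        push_neg at h
        exact hu (funext fun i => h i)
      refine Finset.sum_pos' (fun i _ => mul_nonneg (sq_nonneg _) (hδpos i).le)
        ⟨i0, Finset.mem_univ _, mul_pos (pow_two_pos_of_ne_zero hi0) (hδpos i0)⟩
    rw [e4]
    linarith
  -- positive definiteness and the normal equations
  have hAsymm : ∀ i j, (D + C) i j = (D + C) j i := by
    intro i j
    rw [Matrix.add_apply, Matrix.add_apply, hCsymm i j, hD]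
    rcases eq_or_ne i j with rfl | h
    · rfl
    · rw [Matrix.diagonal_apply_ne _ h, Matrix.diagonal_apply_ne _ (Ne.symm h)]
  have hPD : (D + C).PosDef := by
    rw [Matrix.posDef_iff_dotProduct_mulVec]
    constructor
    · ext i j
      simp only [Matrix.conjTranspose_apply, star_trivial]
      exact hAsymm j i
    · intro x hx
      have he : star x ⬝ᵥ ((D + C) *ᵥ x) = ∑ i, ∑ j, x i * x j * (D + C) i j := by
        simp only [dotProduct, Matrix.mulVec, Pi.star_apply, star_trivial, Finset.mul_sum]
        exact Finset.sum_congr rfl fun i _ => Finset.sum_congr rfl fun j _ => by ring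
      rw [he]
      exact hquadpos x hx
  have hinv : (D + C) * (D + C)⁻¹ = 1 :=
    Matrix.mul_nonsing_inv _ hPD.det_pos.ne'.isUnit
  have hsolve : ∀ i, ∑ j, (D + C) i j * astar k j = C i k := by
    intro i
    have h7 : (D + C) *ᵥ astar k = fun i => C i k := by
      rw [hastar k, Matrix.mulVec_mulVec, hinv, Matrix.one_mulVec]
    have h8 := congrFun h7 i
    simpa [Matrix.mulVec, dotProduct] using h8
  -- final comparison
  have hune : (fun i => a i - astar k i) ≠ 0 := by
    intro h
    apply hne
    funext i
    have := congrFun h i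
    simp only [Pi.zero_apply] at this
    linarith
  have hcross : ∀ v : Fin K → ℝ, ∑ i, ∑ j, v i * astar k j * (D + C) i j
      = ∑ i, v i * C i k := by
    intro v
    refine Finset.sum_congr rfl fun i _ => ?_
    rw [← hsolve i, Finset.mul_sum]
    exact Finset.sum_congr rfl fun j _ => by ring
  have hcross2 : ∑ i, ∑ j, astar k i * a j * (D + C) i j = ∑ j, a j * C j k := by
    rw [Finset.sum_comm]
    refine Finset.sum_congr rfl fun j _ => ?_
    rw [← hsolve j, Finset.mul_sum]
    refine Finset.sum_congr rfl fun i _ => ?_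
    rw [hAsymm i j]; ring
  have hex : ∑ i, ∑ j, (a i - astar k i) * (a j - astar k j) * (D + C) i j
      = ∑ i, ∑ j, a i * a j * (D + C) i j
        - ∑ i, ∑ j, a i * astar k j * (D + C) i j
        - ∑ i, ∑ j, astar k i * a j * (D + C) i j
        + ∑ i, ∑ j, astar k i * astar k j * (D + C) i j := by
    have h9 : ∀ i j, (a i - astar k i) * (a j - astar k j) * (D + C) i j
        = a i * a j * (D + C) i j - a i * astar k j * (D + C) i j
          - astar k i * a j * (D + C) i j + astar k i * astar k j * (D + C) i j :=
      fun i j => by ring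
    simp only [h9, Finset.sum_add_distrib, Finset.sum_sub_distrib]
  have hpos := hquadpos (fun i => a i - astar k i) hune
  rw [hex, hcross a, hcross (astar k), hcross2] at hpos
  rw [key a, key (astar k)]
  have hQ : (∑ i, ∑ j, astar k i * astar k j * (D + C) i j)
      - 2 * (∑ i, astar k i * C i k) + C k k
      < (∑ i, ∑ j, a i * a j * (D + C) i j) - 2 * (∑ i, a i * C i k) + C k k := by
    linarith [hpos, hcross (astar k)]
  exact (mul_lt_mul_iff_right₀ hppos).mpr hQ
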